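/- Suppose |2| = 1 and let p ∈ K with 0 < |p| < 1. Let f(z) = z^2 + z + (1 − p^2)/4 over K. Then the roots of f are (−1 + p)/2 and (−1 − p)/2, the unique root of f' is −1/2, and I(f) = |p| < 1. In particular f does not attain the optimal bound of the non-archimedean Sendov theorem. -/
import Mathlib


/-- `I(f) = max_{z : f(z)=0} min_{w : f'(w)=0} |z - w|`, expressed via `sSup`/`sInf`
(for the polynomials appearing in the statements these sets are finite and nonempty,
so `sSup`/`sInf` are the maximum/minimum). -/
noncomputable def sendovI {K : Type*} [Field K] (v : AbsoluteValue K ℝ)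
    (f : Polynomial K) : ℝ :=
  sSup ((fun z => sInf ((fun w => v (z - w)) '' {w : K | (Polynomial.derivative f).IsRoot w})) ''
    {z : K | f.IsRoot z})

/-- Example: if `|2| = 1` and `0 < |p| < 1`, then `f(z) = z² + z + (1 - p²)/4` has roots
`(-1 + p)/2` and `(-1 - p)/2`, its derivative has unique root `-1/2`, and
`I(f) = |p| < 1`, so `f` does not attain the optimal bound. -/
theorem quadratic_example {K : Type*} [Field K] [IsAlgClosed K] [CharZero K]
    (v : AbsoluteValue K ℝ) (hna : IsNonarchimedean v)
    (h2 : v ((2 : K)) = 1) (p : K) (hp0 : 0 < v p) (hp1 : v p < 1) :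
    {z : K | (Polynomial.X ^ 2 + Polynomial.X
        + Polynomial.C ((1 - p ^ 2) / 4) : Polynomial K).IsRoot z}
      = {(-1 + p) / 2, (-1 - p) / 2} ∧
    {w : K | (Polynomial.derivative (Polynomial.X ^ 2 + Polynomial.X
        + Polynomial.C ((1 - p ^ 2) / 4) : Polynomial K)).IsRoot w}
      = {-1 / 2} ∧
    sendovI v (Polynomial.X ^ 2 + Polynomial.X
        + Polynomial.C ((1 - p ^ 2) / 4) : Polynomial K) = v p ∧
    sendovI v (Polynomial.X ^ 2 + Polynomial.X
        + Polynomial.C ((1 - p ^ 2) / 4) : Polynomial K) < 1 := by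
  have h2K : (2 : K) ≠ 0 := two_ne_zero
  have h4K : (4 : K) ≠ 0 := by norm_num
  have hroots : {z : K | (Polynomial.X ^ 2 + Polynomial.X
        + Polynomial.C ((1 - p ^ 2) / 4) : Polynomial K).IsRoot z}
      = {(-1 + p) / 2, (-1 - p) / 2} := by
    ext z
    simp only [Set.mem_setOf_eq, Polynomial.IsRoot, Polynomial.eval_add, Polynomial.eval_pow,
      Polynomial.eval_X, Polynomial.eval_C, Set.mem_insert_iff, Set.mem_singleton_iff]
    have hfac : z ^ 2 + z + (1 - p ^ 2) / 4
        = (z - (-1 + p) / 2) * (z - (-1 - p) / 2) := by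
      field_simp
      ring
    rw [hfac, mul_eq_zero, sub_eq_zero, sub_eq_zero]
  have hder : {w : K | (Polynomial.derivative (Polynomial.X ^ 2 + Polynomial.X
        + Polynomial.C ((1 - p ^ 2) / 4) : Polynomial K)).IsRoot w} = {-1 / 2} := by
    ext w
    simp only [Set.mem_setOf_eq, Polynomial.IsRoot, Polynomial.derivative_add,
      Polynomial.derivative_C, Polynomial.derivative_X, Polynomial.derivative_X_pow,
      Set.mem_singleton_iff]
    constructor
    · intro h
      simp at h
      field_simp
      linear_combination h
    · intro h
      subst h
      simp
      ring
  refine ⟨hroots, hder, ?_, ?_⟩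
  · unfold sendovI
    rw [hroots, hder]
    have e1 : ((-1 + p) / 2 : K) - (-1 / 2) = p / 2 := by ring
    have e2 : ((-1 - p) / 2 : K) - (-1 / 2) = -(p / 2) := by ring
    have hv : v (p / 2) = v p := by
      rw [map_div₀, h2, div_one]
    have him : (fun z => sInf ((fun w => v (z - w)) '' ({-1 / 2} : Set K))) ''
        ({(-1 + p) / 2, (-1 - p) / 2} : Set K) = {v p} := by
      rw [Set.image_pair]
      simp only [Set.image_singleton, csInf_singleton, e1, e2, map_neg, hv]
      simp [h2]
    rw [him, csSup_singleton]
  · unfold sendovI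
    rw [hroots, hder]
    have e1 : ((-1 + p) / 2 : K) - (-1 / 2) = p / 2 := by ring
    have e2 : ((-1 - p) / 2 : K) - (-1 / 2) = -(p / 2) := by ring
    have hv : v (p / 2) = v p := by
      rw [map_div₀, h2, div_one]
    have him : (fun z => sInf ((fun w => v (z - w)) '' ({-1 / 2} : Set K))) ''
        ({(-1 + p) / 2, (-1 - p) / 2} : Set K) = {v p} := by
      rw [Set.image_pair]
      simp only [Set.image_singleton, csInf_singleton, e1, e2, map_neg, hv]
      simp [h2]
    rw [him, csSup_singleton]
    exact hp1
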